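/- arXiv:1609.01093 — 2 statements merged into one kernel-verified Lean document; each statement's English description precedes it below -/
import Mathlib

section
/- Let 𝔄 be a C*-algebra, let A, B, E be 𝔄-C*-modules, and let θ: A → B be an E-nuclear c.c.p. module map. Let D ⊆ B be a C*-subalgebra and 𝔄-submodule with θ(A) ⊆ D, and suppose there exists a sequence of c.c.p. module maps 𝔼_n: B → D such that ‖𝔼_n(d) − d‖ → 0 for every d ∈ D. Then θ, regarded as a map from A to D, is E-nuclear. -/
/-! Definitions for finite dimensional approximation properties of `𝔄`-`C*`-modules,
following Amini, "Finite dimensional approximation properties of C*-modules". -/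

namespace CStarModulePaper

variable {𝔄 : Type*} [NonUnitalCStarAlgebra 𝔄]

section Defs

variable {R S : Type*}
  [NonUnitalRing R] [StarRing R] [Module ℂ R]
  [NonUnitalRing S] [StarRing S] [Module ℂ S]

/-- An element of a matrix `*`-ring over a (subalgebra of a) C*-algebra is *positive*
iff it is of the form `Xᴴ * X`. -/
def MatIsPos {k : ℕ} (M : Matrix (Fin k) (Fin k) R) : Prop :=
  ∃ X : Matrix (Fin k) (Fin k) R, M = star X * X

/-- A map is *completely positive* if all its matrix amplifications preserve positivity. -/
def IsCompletelyPositive (φ : R → S) : Prop :=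
  ∀ (k : ℕ) (M : Matrix (Fin k) (Fin k) R), MatIsPos M → MatIsPos (M.map φ)

/-- A *bounded module map* between right `𝔄`-modules, with respect to the given norm
functions `nR`, `nS` and right `𝔄`-actions `actR`, `actS`: a bounded linear map
intertwining the actions. -/
structure IsBddModuleMap (nR : R → ℝ) (nS : S → ℝ)
    (actR : R → 𝔄 → R) (actS : S → 𝔄 → S) (φ : R → S) : Prop where
  map_add : ∀ a b, φ (a + b) = φ a + φ b
  map_smul : ∀ (c : ℂ) (a : R), φ (c • a) = c • φ a
  bounded : ∃ C : ℝ, ∀ a, nS (φ a) ≤ C * nR a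
  map_act : ∀ (a : R) (α : 𝔄), φ (actR a α) = actS (φ a) α

/-- A *completely positive module map*: a bounded module map which is completely positive. -/
structure IsCpModuleMap (nR : R → ℝ) (nS : S → ℝ)
    (actR : R → 𝔄 → R) (actS : S → 𝔄 → S) (φ : R → S) : Prop where
  map_add : ∀ a b, φ (a + b) = φ a + φ b
  map_smul : ∀ (c : ℂ) (a : R), φ (c • a) = c • φ a
  bounded : ∃ C : ℝ, ∀ a, nS (φ a) ≤ C * nR a
  cp : IsCompletelyPositive φ
  map_act : ∀ (a : R) (α : 𝔄), φ (actR a α) = actS (φ a) α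

/-- A *c.c.p. module map*: a completely positive, contractive module map. -/
structure IsCcpModuleMap (nR : R → ℝ) (nS : S → ℝ)
    (actR : R → 𝔄 → R) (actS : S → 𝔄 → S) (φ : R → S) : Prop where
  map_add : ∀ a b, φ (a + b) = φ a + φ b
  map_smul : ∀ (c : ℂ) (a : R), φ (c • a) = c • φ a
  cp : IsCompletelyPositive φ
  contractive : ∀ a, nS (φ a) ≤ nR a
  map_act : ∀ (a : R) (α : 𝔄), φ (actR a α) = actS (φ a) α

end Defs

/-- `act` is a compatible contractive right `𝔄`-action making the C*-algebra `A`
into an `𝔄`-C*-module. -/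
structure IsCStarAction {A : Type*} [NonUnitalCStarAlgebra A]
    (act : A → 𝔄 → A) : Prop where
  act_add_left : ∀ a b α, act (a + b) α = act a α + act b α
  act_add_right : ∀ a α β, act a (α + β) = act a α + act a β
  act_smul_left : ∀ (c : ℂ) a α, act (c • a) α = c • act a α
  act_smul_right : ∀ (c : ℂ) a α, act a (c • α) = c • act a α
  norm_act_le : ∀ a α, ‖act a α‖ ≤ ‖a‖ * ‖α‖
  star_act : ∀ a α, star (act a α) = act (star a) (star α)
  mul_act : ∀ a b α, act (a * b) α = a * act b α
  act_mul : ∀ a α β, act a (α * β) = act (act a α) β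

/-- The (necessarily unique) C*-norm on the matrix algebra `Mₙ(E)` over a C*-algebra `E`,
described intrinsically: `‖X‖ = √(spectral radius of Xᴴ * X)`, the spectrum being computed
(algebraically) in the unitization, i.e. via the quasispectrum. -/
noncomputable def matCStarNorm {E : Type*} [NonUnitalCStarAlgebra E] {n : ℕ}
    (X : Matrix (Fin n) (Fin n) E) : ℝ :=
  Real.sqrt (sSup {r : ℝ | ∃ z ∈ quasispectrum ℂ (star X * X), r = ‖z‖})

/-- The entrywise right `𝔄`-action on the matrix algebra `Mₙ(E)`. -/
def matAct {E : Type*} (actE : E → 𝔄 → E) {n : ℕ}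
    (M : Matrix (Fin n) (Fin n) E) (α : 𝔄) : Matrix (Fin n) (Fin n) E :=
  M.map (fun x => actE x α)

/-- A module map `θ` between (subalgebras of) `𝔄`-C*-modules is *`E`-nuclear* if it is
point-norm approximated by compositions of c.c.p. module maps through the matrix
algebras `Mₙ(E)`. -/
def IsENuclear {R S E : Type*}
    [NonUnitalRing R] [StarRing R] [Module ℂ R]
    [NonUnitalRing S] [StarRing S] [Module ℂ S]
    [NonUnitalCStarAlgebra E] (actE : E → 𝔄 → E)
    (nR : R → ℝ) (nS : S → ℝ) (actR : R → 𝔄 → R) (actS : S → 𝔄 → S)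
    (θ : R → S) : Prop :=
  ∀ (F : Finset R) (ε : ℝ), 0 < ε →
    ∃ n : ℕ, 1 ≤ n ∧
      ∃ (φ : R → Matrix (Fin n) (Fin n) E) (ψ : Matrix (Fin n) (Fin n) E → S),
        IsCcpModuleMap nR matCStarNorm actR (matAct actE) φ ∧
        IsCcpModuleMap matCStarNorm nS (matAct actE) actS ψ ∧
        ∀ a ∈ F, nS (ψ (φ a) - θ a) < ε

end CStarModulePaper

open CStarModulePaper in
/-- **dependence on range, via approximating c.c.p. maps.** If `θ : A → B` is
an `E`-nuclear c.c.p. module map, `D ⊆ B` is a C*-subalgebra and `𝔄`-submodule with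
`θ(A) ⊆ D`, and there is a sequence of c.c.p. module maps `𝔼ₙ : B → D` converging to the
identity of `D` in the point-norm topology, then `θ : A → D` is `E`-nuclear. -/
theorem enuclear_corestriction_of_approx {𝔄 A B E : Type*} [NonUnitalCStarAlgebra 𝔄]
    [NonUnitalCStarAlgebra A] [NonUnitalCStarAlgebra B] [NonUnitalCStarAlgebra E]
    (actA : A → 𝔄 → A) (actB : B → 𝔄 → B) (actE : E → 𝔄 → E)
    (hA : IsCStarAction actA) (hB : IsCStarAction actB) (hE : IsCStarAction actE)
    (θ : A → B)
    (hθ : IsCcpModuleMap (fun a : A => ‖a‖) (fun b : B => ‖b‖) actA actB θ)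
    (hnuc : IsENuclear actE (fun a : A => ‖a‖) (fun b : B => ‖b‖) actA actB θ)
    (D : NonUnitalStarSubalgebra ℂ B) (hDclosed : IsClosed (D : Set B))
    (actD : D → 𝔄 → D) (hactD : ∀ (d : D) (α : 𝔄), (actD d α : B) = actB (d : B) α)
    (θ' : A → D) (hθ' : ∀ a : A, (θ' a : B) = θ a)
    (𝔼 : ℕ → B → D)
    (h𝔼 : ∀ n : ℕ,
      IsCcpModuleMap (fun b : B => ‖b‖) (fun d : D => ‖(d : B)‖) actB actD (𝔼 n))
    (h𝔼lim : ∀ d : D,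
      Filter.Tendsto (fun n : ℕ => ‖((𝔼 n (d : B) : D) : B) - (d : B)‖)
        Filter.atTop (nhds 0)) :
    IsENuclear actE (fun a : A => ‖a‖) (fun d : D => ‖(d : B)‖) actA actD θ' := by
  intro F ε hε
  obtain ⟨n, hn, φ, ψ, hφ, hψ, happrox⟩ := hnuc F (ε / 2) (by positivity)
  have hev : ∀ᶠ m in Filter.atTop,
      ∀ a ∈ F, ‖((𝔼 m ((θ' a : B)) : D) : B) - ((θ' a : D) : B)‖ < ε / 2 := by
    rw [Filter.eventually_all_finset]
    intro a _
    exact (h𝔼lim (θ' a)).eventually_lt_const (by positivity)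
  obtain ⟨m, hm⟩ := hev.exists
  have hsub : ∀ x y : B, 𝔼 m (x - y) = 𝔼 m x - 𝔼 m y := by
    intro x y
    have hneg : 𝔼 m (-y) = -𝔼 m y := by
      have := (h𝔼 m).map_smul (-1 : ℂ) y
      simpa using this
    calc 𝔼 m (x - y) = 𝔼 m (x + -y) := by rw [sub_eq_add_neg]
      _ = 𝔼 m x + 𝔼 m (-y) := (h𝔼 m).map_add x (-y)
      _ = 𝔼 m x - 𝔼 m y := by rw [hneg, sub_eq_add_neg]
  refine ⟨n, hn, φ, fun X => 𝔼 m (ψ X), hφ, ?_, ?_⟩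
  · refine ⟨?_, ?_, ?_, ?_, ?_⟩
    · intro x y; rw [hψ.map_add, (h𝔼 m).map_add]
    · intro c x; rw [hψ.map_smul, (h𝔼 m).map_smul]
    · intro k M hM
      have := (h𝔼 m).cp k (M.map ψ) (hψ.cp k M hM)
      simpa [Matrix.map_map, Function.comp_def] using this
    · intro X
      exact le_trans ((h𝔼 m).contractive (ψ X)) (hψ.contractive X)
    · intro X α; rw [hψ.map_act, (h𝔼 m).map_act]
  · intro a ha
    have h1 : ‖ψ (φ a) - θ a‖ < ε / 2 := happrox a ha
    have h2 := hm a ha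
    have key : (𝔼 m (ψ (φ a)) - θ' a : D)
        = 𝔼 m (ψ (φ a) - θ a) + (𝔼 m ((θ' a : B)) - θ' a) := by
      rw [hsub, hθ' a]; abel
    calc ‖((𝔼 m (ψ (φ a)) - θ' a : D) : B)‖
        = ‖((𝔼 m (ψ (φ a) - θ a) : D) : B) + ((𝔼 m ((θ' a : B)) - θ' a : D) : B)‖ := by
          rw [key]; push_cast; ring_nf
      _ ≤ ‖((𝔼 m (ψ (φ a) - θ a) : D) : B)‖ + ‖((𝔼 m ((θ' a : B)) - θ' a : D) : B)‖ :=
          norm_add_le _ _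
      _ < ε / 2 + ε / 2 := by
          refine add_lt_add_of_le_of_lt ?_ ?_
          · exact le_trans ((h𝔼 m).contractive _) (le_of_lt h1)
          · simpa using h2
      _ = ε := by ring
end

section
/- Let 𝔄 be a C*-algebra and let A, E be 𝔄-C*-modules. Assume E is injective as an 𝔄-module in the following sense: for every C*-subalgebra and 𝔄-submodule B ⊆ A, every n ≥ 1, and every c.c.p. module map φ: B → Mₙ(E), there exists a c.c.p. module map φ̃: A → Mₙ(E) with φ̃|_B = φ. Then A is E-nuclear if and only if A is locally E-nuclear, i.e., for every finite set F ⊆ A and every ε > 0 there is an E-nuclear C*-subalgebra and 𝔄-submodule B ⊆ A such that every a ∈ F lies within distance ε (in norm) of B. -/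
section ENuclearAux

open CStarModulePaper

set_option linter.unusedSectionVars false

variable {R S T : Type*}
  [NonUnitalRing R] [StarRing R] [Module ℂ R]
  [NonUnitalRing S] [StarRing S] [Module ℂ S]
  [NonUnitalRing T] [StarRing T] [Module ℂ T]

theorem aux_cp_of_hom (f : R → S) (hadd : ∀ a b, f (a + b) = f a + f b)
    (hmul : ∀ a b, f (a * b) = f a * f b) (hstar : ∀ a, f (star a) = star (f a)) :
    IsCompletelyPositive f := by
  intro k M hM
  obtain ⟨X, rfl⟩ := hM
  refine ⟨X.map f, ?_⟩
  ext i j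
  simp only [Matrix.map_apply, Matrix.mul_apply, Matrix.star_apply]
  rw [show f = ⇑(AddMonoidHom.mk' f hadd) from rfl, map_sum]
  exact Finset.sum_congr rfl fun k _ => by
    simp only [AddMonoidHom.mk'_apply, hmul, hstar]

theorem aux_cp_comp {φ : R → S} {ψ : S → T}
    (hφ : IsCompletelyPositive φ) (hψ : IsCompletelyPositive ψ) :
    IsCompletelyPositive fun a => ψ (φ a) := by
  intro k M hM
  have := hψ k (M.map φ) (hφ k M hM)
  rw [Matrix.map_map] at this
  exact this

theorem aux_map_sub {f : R → S} (hadd : ∀ a b, f (a + b) = f a + f b)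
    (hsmul : ∀ (c : ℂ) (a : R), f (c • a) = c • f a) (a b : R) :
    f (a - b) = f a - f b := by
  have h : a - b = a + (-1 : ℂ) • b := by
    rw [neg_one_smul, sub_eq_add_neg]
  rw [h, hadd, hsmul, neg_one_smul, ← sub_eq_add_neg]

end ENuclearAux

open CStarModulePaper in
/-- If `E` is injective as an `𝔄`-module (c.c.p. module maps into `Mₙ(E)`
defined on C*-subalgebras and `𝔄`-submodules of `A` extend to `A`), then `A` is
`E`-nuclear iff `A` is locally `E`-nuclear. -/
theorem enuclear_iff_locally_enuclear {𝔄 A E : Type*} [NonUnitalCStarAlgebra 𝔄]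
    [NonUnitalCStarAlgebra A] [NonUnitalCStarAlgebra E]
    (actA : A → 𝔄 → A) (actE : E → 𝔄 → E)
    (hA : IsCStarAction actA) (hE : IsCStarAction actE)
    (hinj : ∀ (B : NonUnitalStarSubalgebra ℂ A), IsClosed (B : Set A) →
      ∀ (actB : B → 𝔄 → B), (∀ (b : B) (α : 𝔄), (actB b α : A) = actA (b : A) α) →
      ∀ (n : ℕ), 1 ≤ n →
      ∀ (φ : B → Matrix (Fin n) (Fin n) E),
        IsCcpModuleMap (fun b : B => ‖(b : A)‖) matCStarNorm actB (matAct actE) φ →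
        ∃ φext : A → Matrix (Fin n) (Fin n) E,
          IsCcpModuleMap (fun a : A => ‖a‖) matCStarNorm actA (matAct actE) φext ∧
          ∀ b : B, φext (b : A) = φ b) :
    IsENuclear actE (fun a : A => ‖a‖) (fun a : A => ‖a‖) actA actA (id : A → A) ↔
    (∀ (F : Finset A) (ε : ℝ), 0 < ε →
      ∃ (B : NonUnitalStarSubalgebra ℂ A), IsClosed (B : Set A) ∧
        ∃ (actB : B → 𝔄 → B), (∀ (b : B) (α : 𝔄), (actB b α : A) = actA (b : A) α) ∧
          IsENuclear actE (fun b : B => ‖(b : A)‖) (fun b : B => ‖(b : A)‖) actB actB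
            (id : B → B) ∧
          ∀ a ∈ F, ∃ b ∈ B, ‖a - b‖ < ε) := by
  constructor
  · -- E-nuclear implies locally E-nuclear: take B = ⊤
    intro hnuc F ε hε
    classical
    refine ⟨⊤, by simp, fun b α => ⟨actA (b : A) α, by simp⟩, fun b α => rfl, ?_, ?_⟩
    · intro G δ hδ
      obtain ⟨n, hn, φ, ψ, hφ, hψ, happ⟩ := hnuc (G.image Subtype.val) δ hδ
      have hval_add : ∀ a b : (⊤ : NonUnitalStarSubalgebra ℂ A),
          ((a + b : (⊤ : NonUnitalStarSubalgebra ℂ A)) : A) = (a : A) + (b : A) := fun _ _ => rfl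
      refine ⟨n, hn, fun b => φ (b : A), fun x => ⟨ψ x, by simp⟩, ?_, ?_, ?_⟩
      · exact
          { map_add := fun a b => by rw [hval_add, hφ.map_add]
            map_smul := fun c a => by
              rw [show ((c • a : (⊤ : NonUnitalStarSubalgebra ℂ A)) : A) = c • (a : A) from rfl,
                hφ.map_smul]
            cp := aux_cp_comp (aux_cp_of_hom (Subtype.val) (fun _ _ => rfl) (fun _ _ => rfl)
              (fun _ => rfl)) hφ.cp
            contractive := fun a => hφ.contractive (a : A)
            map_act := fun a α => hφ.map_act (a : A) α }
      · exact
          { map_add := fun a b => Subtype.ext (hψ.map_add a b)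
            map_smul := fun c a => Subtype.ext (hψ.map_smul c a)
            cp := aux_cp_comp hψ.cp (aux_cp_of_hom
              (fun a : A => (⟨a, by simp⟩ : (⊤ : NonUnitalStarSubalgebra ℂ A)))
              (fun _ _ => rfl) (fun _ _ => rfl) (fun _ => rfl))
            contractive := fun x => hψ.contractive x
            map_act := fun x α => Subtype.ext (hψ.map_act x α) }
      · intro b hb
        have := happ (b : A) (Finset.mem_image_of_mem Subtype.val hb)
        simpa using this
    · intro a ha
      exact ⟨a, by simp, by simpa using hε⟩
  · -- locally E-nuclear implies E-nuclear
    intro hloc F ε hε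
    classical
    obtain ⟨B, hBcl, actB, hactB, hBnuc, happrox⟩ := hloc F (ε / 3) (by linarith)
    choose b hbB hbnear using happrox
    set G : Finset B := F.attach.image (fun a => ⟨b a.1 a.2, hbB a.1 a.2⟩) with hG
    obtain ⟨n, hn, φ, ψ, hφ, hψ, happ⟩ := hBnuc G (ε / 3) (by linarith)
    obtain ⟨φext, hφext, hext⟩ := hinj B hBcl actB hactB n hn φ hφ
    refine ⟨n, hn, φext, fun x => ((ψ x : B) : A), hφext, ?_, ?_⟩
    · exact
        { map_add := fun x y => by rw [hψ.map_add]; rfl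
          map_smul := fun c x => by rw [hψ.map_smul]; rfl
          cp := aux_cp_comp hψ.cp (aux_cp_of_hom (Subtype.val) (fun _ _ => rfl)
            (fun _ _ => rfl) (fun _ => rfl))
          contractive := fun x => hψ.contractive x
          map_act := fun x α => by rw [hψ.map_act, hactB] }
    · intro a ha
      set b' : B := ⟨b a ha, hbB a ha⟩ with hb'
      have hb'G : b' ∈ G := Finset.mem_image.mpr ⟨⟨a, ha⟩, F.mem_attach _, rfl⟩
      have h1 : ‖((ψ (φ b') - b' : B) : A)‖ < ε / 3 := happ b' hb'G
      have h2 : ‖a - (b' : A)‖ < ε / 3 := hbnear a ha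
      have hsubψ : ∀ x y, ((ψ (x - y) : B) : A) = ((ψ x : B) : A) - ((ψ y : B) : A) := by
        intro x y
        rw [aux_map_sub hψ.map_add hψ.map_smul]
        rfl
      have hsubφ := aux_map_sub hφext.map_add hφext.map_smul a (b' : A)
      have key : ((ψ (φext a) : B) : A) - a
          = ((ψ (φext (a - (b' : A))) : B) : A)
            + ((ψ (φ b') - b' : B) : A) + ((b' : A) - a) := by
        rw [hsubφ, hsubψ, hext b']
        have hcoe : ((ψ (φ b') - b' : B) : A) = ((ψ (φ b') : B) : A) - (b' : A) := rfl
        rw [hcoe]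
        abel
      have t1 : ‖((ψ (φext (a - (b' : A))) : B) : A)‖ < ε / 3 := by
        calc ‖((ψ (φext (a - (b' : A))) : B) : A)‖
            ≤ matCStarNorm (φext (a - (b' : A))) := hψ.contractive _
          _ ≤ ‖a - (b' : A)‖ := hφext.contractive _
          _ < ε / 3 := h2
      have t3 : ‖(b' : A) - a‖ < ε / 3 := by rwa [norm_sub_rev]
      have : ‖((ψ (φext a) : B) : A) - a‖ < ε / 3 + ε / 3 + ε / 3 := by
        rw [key]
        calc ‖((ψ (φext (a - (b' : A))) : B) : A)
              + ((ψ (φ b') - b' : B) : A) + ((b' : A) - a)‖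
            ≤ ‖((ψ (φext (a - (b' : A))) : B) : A)‖
              + ‖((ψ (φ b') - b' : B) : A)‖ + ‖(b' : A) - a‖ := norm_add₃_le
          _ < ε / 3 + ε / 3 + ε / 3 := by
              exact add_lt_add (add_lt_add t1 h1) t3
      simpa using lt_of_lt_of_le this (by linarith)
end
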